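/- Let r ≥ 0 and let T ∈ M_{r+1}(ℂ) be a Hermitian matrix (T = T*) with trace zero. Then there exists Y ∈ M_{r+1}(ℂ) such that T = Y*·Y − Y·Y*, i.e., T is a self-commutator [Y*, Y]. -/

import Mathlib

open Matrix Finset

lemma partial_sum_nonpos {n : ℕ} (d : Fin (n+1) → ℝ) (hmono : Monotone d)
    (hsum : ∑ i, d i = 0) (j : Fin (n+1)) : ∑ i ∈ Iic j, d i ≤ 0 := by
  set A := Iic j with hA
  set B := Aᶜ with hB
  have hBsum : ∑ k ∈ B, d k = -∑ i ∈ A, d i := by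
    have := Finset.sum_add_sum_compl A d
    rw [hsum] at this; linarith
  have hAB : ∀ i ∈ A, ∀ k ∈ B, d i ≤ d k := by
    intro i hi k hk
    apply hmono
    simp only [hA, hB, mem_Iic, mem_compl] at hi hk
    exact le_trans hi (le_of_not_ge hk)
  have h1 : (B.card : ℝ) * ∑ i ∈ A, d i ≤ (A.card : ℝ) * ∑ k ∈ B, d k := by
    calc (B.card : ℝ) * ∑ i ∈ A, d i = ∑ i ∈ A, ∑ _k ∈ B, d i := by
          rw [Finset.mul_sum]; exact Finset.sum_congr rfl (fun i _ => by
            rw [Finset.sum_const, nsmul_eq_mul])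
      _ ≤ ∑ i ∈ A, ∑ k ∈ B, d k := by
          refine Finset.sum_le_sum fun i hi => Finset.sum_le_sum fun k hk => hAB i hi k hk
      _ = (A.card : ℝ) * ∑ k ∈ B, d k := by
          rw [Finset.sum_const, nsmul_eq_mul]
  have hcard : (A.card : ℝ) + B.card = (n+1 : ℕ) := by
    rw [hB]; norm_cast
    rw [Finset.card_add_card_compl]; simp
  rw [hBsum] at h1
  have hn : (0:ℝ) < (n+1:ℕ) := by positivity
  nlinarith [h1, hcard]

lemma diag_case (r : ℕ) (d : Fin (r+1) → ℝ) (hmono : Monotone d)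
    (hsum : ∑ i, d i = 0) :
    ∃ Y : Matrix (Fin (r+1)) (Fin (r+1)) ℂ,
      diagonal (fun i => (d i : ℂ)) = Yᴴ * Y - Y * Yᴴ := by
  set s : Fin (r+1) → ℝ := fun j => -∑ i ∈ Iic j, d i with hs
  have hs0 : ∀ j, 0 ≤ s j := fun j => by
    simpa [hs] using partial_sum_nonpos d hmono hsum j
  have hslast : s (Fin.last r) = 0 := by
    have : Iic (Fin.last r) = Finset.univ := by
      ext k; simp [Fin.le_last]
    simp [hs, this, hsum]
  set c : Fin (r+1) → ℝ := fun j => Real.sqrt (s j) with hc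
  have hcsq : ∀ j, c j * c j = s j := fun j => Real.mul_self_sqrt (hs0 j)
  set Y : Matrix (Fin (r+1)) (Fin (r+1)) ℂ :=
    fun i j => if (i:ℕ)+1 = (j:ℕ) then (c i : ℂ) else 0 with hY
  refine ⟨Y, ?_⟩
  have hterm2 : ∀ i j k : Fin (r+1),
      Y i k * star (Y j k) =
        if (i:ℕ)+1 = (k:ℕ) ∧ (j:ℕ)+1 = (k:ℕ) then ((c i : ℂ) * (c j : ℂ)) else 0 := by
    intro i j k
    simp only [hY, Complex.star_def, apply_ite (starRingEnd ℂ), map_zero,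
      Complex.conj_ofReal, ite_mul, mul_ite, mul_zero, zero_mul, ← ite_and]
    exact if_congr and_comm rfl rfl
  have hterm1 : ∀ i j k : Fin (r+1),
      star (Y k i) * Y k j =
        if (k:ℕ)+1 = (i:ℕ) ∧ (k:ℕ)+1 = (j:ℕ) then ((c k : ℂ) * (c k : ℂ)) else 0 := by
    intro i j k
    simp only [hY, Complex.star_def, apply_ite (starRingEnd ℂ), map_zero,
      Complex.conj_ofReal, ite_mul, mul_ite, mul_zero, zero_mul, ← ite_and]
    exact if_congr and_comm rfl rfl
  have hYY : Y * Yᴴ = diagonal (fun i => (s i : ℂ)) := by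
    ext i j
    rw [mul_apply]
    simp only [conjTranspose_apply]
    by_cases hij : i = j
    · subst hij
      rw [diagonal_apply_eq]
      simp only [hterm2, and_self]
      induction i using Fin.lastCases with
      | last =>
        rw [Finset.sum_eq_zero, hslast]
        · norm_num
        · intro k _
          rw [if_neg]
          simp only [Fin.val_last]
          omega
      | cast i' =>
        rw [Finset.sum_eq_single i'.succ]
        · rw [if_pos (by simp), ← Complex.ofReal_mul, hcsq]
        · intro k _ hk
          rw [if_neg]
          simp only [Fin.coe_castSucc]
          intro h
          exact hk (Fin.ext (by simp only [Fin.val_succ]; omega))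
        · simp
    · rw [diagonal_apply_ne _ hij]
      apply Finset.sum_eq_zero
      intro k _
      simp only [hterm2]
      rw [if_neg]
      rintro ⟨h1, h2⟩
      exact hij (Fin.ext (by omega))
  have hYY2 : Yᴴ * Y = diagonal
      (fun i => Fin.cases 0 (fun i' => (s i'.castSucc : ℂ)) i) := by
    ext i j
    rw [mul_apply]
    simp only [conjTranspose_apply]
    by_cases hij : i = j
    · subst hij
      rw [diagonal_apply_eq]
      simp only [hterm1, and_self]
      induction i using Fin.cases with
      | zero =>
        rw [Finset.sum_eq_zero]
        · simp
        · intro k _; simp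
      | succ i' =>
        rw [Finset.sum_eq_single i'.castSucc]
        · rw [if_pos (by simp), ← Complex.ofReal_mul, hcsq]
          simp
        · intro k _ hk
          rw [if_neg]
          simp only [Fin.val_succ]
          intro h
          exact hk (Fin.ext (by simp only [Fin.coe_castSucc]; omega))
        · simp
    · rw [diagonal_apply_ne _ hij]
      apply Finset.sum_eq_zero
      intro k _
      simp only [hterm1]
      rw [if_neg]
      rintro ⟨h1, h2⟩
      exact hij (Fin.ext (by omega))
  have key : ∀ i : Fin (r+1), (d i : ℂ) =
      (Fin.cases 0 (fun i' => (s i'.castSucc : ℂ)) i) - (s i : ℂ) := by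
    intro i
    induction i using Fin.cases with
    | zero =>
      have h0 : Iic (0 : Fin (r+1)) = {0} := by
        ext k; simp [Fin.le_zero_iff]
      rw [Fin.cases_zero]
      simp only [hs, h0, Finset.sum_singleton]
      push_cast
      ring
    | succ i' =>
      have hIio : Finset.Iio (i'.succ) = Finset.Iic (i'.castSucc) := by
        ext k
        simp [Fin.lt_iff_val_lt_val, Fin.le_iff_val_le_val]
      have hins : Finset.Iic (i'.succ) = insert i'.succ (Finset.Iic i'.castSucc) := by
        rw [← hIio, Finset.Iio_insert]
      have hsd : s i'.castSucc - s i'.succ = d i'.succ := by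
        simp only [hs, hins]
        rw [Finset.sum_insert (by rw [← hIio]; simp)]
        ring
      rw [Fin.cases_succ, ← hsd]
      push_cast
      ring
  rw [hYY, hYY2, diagonal_sub]
  exact congrArg diagonal (funext fun i => key i)

theorem stmt_5 (r : ℕ) (T : Matrix (Fin (r + 1)) (Fin (r + 1)) ℂ)
    (hT : T.IsHermitian) (htr : T.trace = 0) :
    ∃ Y : Matrix (Fin (r + 1)) (Fin (r + 1)) ℂ, T = Yᴴ * Y - Y * Yᴴ := by
  classical
  set V : Matrix (Fin (r+1)) (Fin (r+1)) ℂ := (hT.eigenvectorUnitary : Matrix (Fin (r+1)) (Fin (r+1)) ℂ) with hVdef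
  have hVU : star V * V = 1 := (Matrix.mem_unitaryGroup_iff').mp hT.eigenvectorUnitary.2
  have hspec : T = V * diagonal (fun i => (hT.eigenvalues i : ℂ)) * star V := by
    have h := hT.spectral_theorem
    rw [hVdef]
    convert h using 3
    rw [Unitary.conjStarAlgAut_apply, Function.comp_def]
    rfl
  -- sum of eigenvalues is zero
  have hevsum : ∑ i, hT.eigenvalues i = 0 := by
    have h1 : T.trace = ∑ i, (hT.eigenvalues i : ℂ) := by
      calc T.trace = (V * diagonal (fun i => (hT.eigenvalues i : ℂ)) * star V).trace := by
            rw [← hspec]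
        _ = (star V * (V * diagonal (fun i => (hT.eigenvalues i : ℂ)))).trace :=
            trace_mul_comm _ _
        _ = ∑ i, (hT.eigenvalues i : ℂ) := by
            rw [← mul_assoc, hVU, one_mul, trace_diagonal]
    rw [htr] at h1
    have h2 : ((∑ i, hT.eigenvalues i : ℝ) : ℂ) = 0 := by
      rw [Complex.ofReal_sum]; exact h1.symm
    exact_mod_cast h2
  set σ : Equiv.Perm (Fin (r+1)) := Tuple.sort hT.eigenvalues with hσ
  have hmono : Monotone (hT.eigenvalues ∘ σ) := Tuple.monotone_sort _
  have hsum : ∑ i, (hT.eigenvalues ∘ σ) i = 0 := by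
    rw [Function.comp_def]
    rw [Equiv.sum_comp σ hT.eigenvalues]
    exact hevsum
  obtain ⟨X, hX⟩ := diag_case r (hT.eigenvalues ∘ σ) hmono hsum
  set U : Matrix (Fin (r+1)) (Fin (r+1)) ℂ := V.submatrix id σ with hUdef
  have hUU : Uᴴ * U = 1 := by
    rw [hUdef, conjTranspose_submatrix]
    have : Vᴴ.submatrix (⇑σ) id * V.submatrix id (⇑σ)
        = (Vᴴ * V).submatrix (⇑σ) (⇑σ) := by
      have := Matrix.submatrix_mul_equiv Vᴴ V (⇑σ) (Equiv.refl (Fin (r+1))) (⇑σ)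
      simpa using this
    rw [this, ← star_eq_conjTranspose, hVU, submatrix_one_equiv]
  have hTU : T = U * diagonal (fun i => ((hT.eigenvalues ∘ σ) i : ℂ)) * Uᴴ := by
    have hd : diagonal (fun i => ((hT.eigenvalues ∘ σ) i : ℂ))
        = (diagonal (fun i => (hT.eigenvalues i : ℂ))).submatrix (⇑σ) (⇑σ) := by
      rw [Matrix.submatrix_diagonal_equiv]
      rfl
    rw [hd, hUdef, conjTranspose_submatrix,
      Matrix.submatrix_mul_equiv V _ id σ (⇑σ),
      Matrix.submatrix_mul_equiv _ Vᴴ id σ id,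
      submatrix_id_id, ← star_eq_conjTranspose, ← hspec]
  refine ⟨U * X * Uᴴ, ?_⟩
  have h1 : (U * X * Uᴴ)ᴴ * (U * X * Uᴴ) = U * (Xᴴ * X) * Uᴴ := by
    rw [conjTranspose_mul, conjTranspose_mul, conjTranspose_conjTranspose]
    simp only [← mul_assoc]
    rw [mul_assoc (U * Xᴴ) Uᴴ U, hUU, mul_one, mul_assoc U Xᴴ X]
  have h2 : (U * X * Uᴴ) * (U * X * Uᴴ)ᴴ = U * (X * Xᴴ) * Uᴴ := by
    rw [conjTranspose_mul, conjTranspose_mul, conjTranspose_conjTranspose]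
    simp only [← mul_assoc]
    rw [mul_assoc (U * X) Uᴴ U, hUU, mul_one, mul_assoc U X Xᴴ]
  rw [h1, h2, hTU, hX, mul_sub, sub_mul]
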